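/- The CLUB estimator is an upper bound on mutual information: for finite random variables X and ω with joint pmf p(x,ω) and true conditional p(x|ω), I_CLUB(X;ω) := E_{p(x,ω)}[log p(x|ω)] − E_{p(x)p(ω)}[log p(x|ω)] satisfies I(X;ω) ≤ I_CLUB(X;ω). -/

import Mathlib

open Finset

/-- Mutual information of a joint pmf on a product of finite sets (natural log). -/
noncomputable def mutualInfo {A B : Type*} [Fintype A] [Fintype B] (p : A → B → ℝ) : ℝ :=
  ∑ a, ∑ b, p a b * Real.log (p a b / ((∑ b', p a b') * (∑ a', p a' b)))

/-- The CLUB estimator (with the true conditional `p(x|ω) = p(x,ω)/p(ω)`). -/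
noncomputable def clubMI {X W : Type*} [Fintype X] [Fintype W] (p : X → W → ℝ) : ℝ :=
  (∑ x, ∑ w, p x w * Real.log (p x w / ∑ x', p x' w)) -
    ∑ x, ∑ w, (∑ w', p x w') * (∑ x', p x' w) * Real.log (p x w / ∑ x', p x' w)

/-- CLUB upper-bounds the true mutual information. -/
theorem mutualInfo_le_club {X W : Type*} [Fintype X] [Fintype W]
    (p : X → W → ℝ) (hp : ∀ x w, 0 < p x w) (hsum : ∑ x, ∑ w, p x w = 1) :
    mutualInfo p ≤ clubMI p := by
  rcases isEmpty_or_nonempty X with hX | hX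
  · simp at hsum
  rcases isEmpty_or_nonempty W with hW | hW
  · simp at hsum
  have hpx0 : ∀ x, 0 < ∑ w', p x w' := fun x =>
    Finset.sum_pos (fun w _ => hp x w) Finset.univ_nonempty
  have hpw0 : ∀ w, 0 < ∑ x', p x' w := fun w =>
    Finset.sum_pos (fun x _ => hp x w) Finset.univ_nonempty
  have hpw1 : ∑ w, ∑ x', p x' w = 1 := by rw [Finset.sum_comm]; exact hsum
  have expand1 : ∀ x w, Real.log (p x w / ((∑ w', p x w') * (∑ x', p x' w)))
      = Real.log (p x w / (∑ x', p x' w)) - Real.log (∑ w', p x w') := by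
    intro x w
    rw [Real.log_div (hp x w).ne' (mul_pos (hpx0 x) (hpw0 w)).ne', Real.log_mul (hpx0 x).ne' (hpw0 w).ne',
      Real.log_div (hp x w).ne' (hpw0 w).ne']
    ring
  -- key nonpositivity: expected KL ≥ 0
  have key : ∑ x, ∑ w, (∑ w', p x w') * (∑ x', p x' w)
      * Real.log (p x w / ((∑ w', p x w') * (∑ x', p x' w))) ≤ 0 := by
    have hprod : ∑ x, ∑ w, (∑ w', p x w') * (∑ x', p x' w) = 1 := by
      simp_rw [← Finset.mul_sum]
      rw [hpw1]
      simpa using hsum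
    calc ∑ x, ∑ w, (∑ w', p x w') * (∑ x', p x' w)
          * Real.log (p x w / ((∑ w', p x w') * (∑ x', p x' w)))
        ≤ ∑ x, ∑ w, (p x w - (∑ w', p x w') * (∑ x', p x' w)) := by
          refine Finset.sum_le_sum fun x _ => Finset.sum_le_sum fun w _ => ?_
          have hne : (∑ w', p x w') * (∑ x', p x' w) ≠ 0 := (mul_pos (hpx0 x) (hpw0 w)).ne'
          have ht : 0 < p x w / ((∑ w', p x w') * (∑ x', p x' w)) :=
            div_pos (hp x w) (mul_pos (hpx0 x) (hpw0 w))
          calc (∑ w', p x w') * (∑ x', p x' w)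
                * Real.log (p x w / ((∑ w', p x w') * (∑ x', p x' w)))
              ≤ (∑ w', p x w') * (∑ x', p x' w)
                * (p x w / ((∑ w', p x w') * (∑ x', p x' w)) - 1) := by
                exact mul_le_mul_of_nonneg_left (Real.log_le_sub_one_of_pos ht)
                  (mul_pos (hpx0 x) (hpw0 w)).le
            _ = p x w - (∑ w', p x w') * (∑ x', p x' w) := by
                rw [mul_sub, mul_one, mul_comm, div_mul_cancel₀ _ hne]
      _ = 0 := by simp [Finset.sum_sub_distrib, hsum, hprod]
  unfold mutualInfo clubMI
  simp_rw [expand1, mul_sub, Finset.sum_sub_distrib]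
  apply sub_le_sub_left
  -- need: ∑∑ px pw log(p/pw) ≤ ∑∑ p log px
  have hA : ∑ x, ∑ w, p x w * Real.log (∑ w', p x w')
      = ∑ x, ∑ w, (∑ w', p x w') * (∑ x', p x' w) * Real.log (∑ w', p x w') := by
    refine Finset.sum_congr rfl fun x _ => ?_
    have h2 : ∑ w, (∑ w', p x w') * (∑ x', p x' w) * Real.log (∑ w', p x w')
        = (∑ w', p x w') * Real.log (∑ w', p x w') * ∑ w, ∑ x', p x' w := by
      rw [Finset.mul_sum]; exact Finset.sum_congr rfl fun w _ => by ring
    rw [← Finset.sum_mul, h2, hpw1, mul_one]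
  rw [hA, ← sub_nonpos, ← Finset.sum_sub_distrib]
  simp_rw [← Finset.sum_sub_distrib, ← mul_sub, ← expand1]
  exact key
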